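/- Let R be a ring with involution *. If every element of R is the sum of a projection (an element e with e² = e = e*) and an element of the Jacobson radical that commute with each other, then every element of R is the sum of a projection and a unit that commute with each other. -/
import Mathlib


/-- A *-ring `R` is strongly J-*-clean if every element is the sum of a projection
and an element of the Jacobson radical that commute. -/
def StronglyJStarClean (R : Type*) [Ring R] [StarRing R] : Prop :=
  ∀ a : R, ∃ e u : R, e * e = e ∧ star e = e ∧
    u ∈ Ideal.jacobson (⊥ : Ideal R) ∧ a = e + u ∧ a * e = e * a

private lemma isUnit_one_add_jac {R : Type*} [Ring R] {x : R}
    (hx : x ∈ Ideal.jacobson (⊥ : Ideal R)) : IsUnit (1 + x) := by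
  obtain ⟨z, hz⟩ := Ideal.exists_mul_add_sub_mem_of_mem_jacobson x hx
  rw [Ideal.mem_bot, sub_eq_zero] at hz
  -- z * (x + 1) = 1
  have hz' : z = 1 + -(z * x) := by
    have h1 : z * x + z = 1 := by rw [← hz]; noncomm_ring
    linear_combination (norm := noncomm_ring) h1
  have hmem : -(z * x) ∈ Ideal.jacobson (⊥ : Ideal R) :=
    Submodule.neg_mem _ (Ideal.mul_mem_left _ z hx)
  obtain ⟨w, hw⟩ := Ideal.exists_mul_add_sub_mem_of_mem_jacobson _ hmem
  rw [Ideal.mem_bot, sub_eq_zero] at hw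
  -- w * (-(z*x) + 1) = 1, i.e. w * z = 1
  have hwz : w * z = 1 := by rw [hz', add_comm 1 (-(z * x))]; exact hw
  have hweq : w = 1 + x := by
    calc w = w * (z * (x + 1)) := by rw [hz, mul_one]
    _ = (w * z) * (x + 1) := by noncomm_ring
    _ = 1 + x := by rw [hwz]; noncomm_ring
  have hleft : (1 + x) * z = 1 := by rw [← hweq, hwz]
  have hright : z * (1 + x) = 1 := by rw [add_comm 1 x]; exact hz
  exact ⟨⟨1 + x, z, hleft, hright⟩, rfl⟩

theorem stmt_0 (R : Type*) [Ring R] [StarRing R]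
    (h : StronglyJStarClean R) :
    ∀ a : R, ∃ e v : R, e * e = e ∧ star e = e ∧ IsUnit v ∧ a = e + v ∧ a * e = e * a := by
  intro a
  obtain ⟨e, u, he, hse, hu, hau, hcomm⟩ := h a
  refine ⟨1 - e, 2 * e - 1 + u, ?_, ?_, ?_, ?_, ?_⟩
  · have : (1 - e) * (1 - e) = 1 - e - e + e * e := by noncomm_ring
    rw [this, he]; noncomm_ring
  · simp [star_sub, hse]
  · have hsq : (2 * e - 1) * (2 * e - 1) = 1 := by
      have h1 : (2 * e - 1) * (2 * e - 1) = 4 * (e * e) - 4 * e + 1 := by noncomm_ring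
      rw [h1, he]; noncomm_ring
    have hmem : (2 * e - 1) * u ∈ Ideal.jacobson (⊥ : Ideal R) :=
      Ideal.mul_mem_left _ _ hu
    have hu1 : IsUnit (1 + (2 * e - 1) * u) := isUnit_one_add_jac hmem
    have hu2 : IsUnit (2 * e - 1) := ⟨⟨2 * e - 1, 2 * e - 1, hsq, hsq⟩, rfl⟩
    have heq : (2 * e - 1) * (1 + (2 * e - 1) * u) = 2 * e - 1 + u := by
      calc (2 * e - 1) * (1 + (2 * e - 1) * u)
          = (2 * e - 1) + ((2 * e - 1) * (2 * e - 1)) * u := by noncomm_ring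
      _ = 2 * e - 1 + u := by rw [hsq]; noncomm_ring
    rw [← heq]
    exact hu2.mul hu1
  · rw [hau]; noncomm_ring
  · rw [mul_sub, sub_mul, mul_one, one_mul, hcomm]
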